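/- Suppose p ≥ 2, d_f ≥ 1, d_w ≥ 2 with d_f − p(d_f − d_w) > 0, and c_3 > 0. Then Σ_{n=1}^∞ 2^{−n d_f} ( ∫_0^1 t^{−d_f/d_w} exp{ −c_3 · 2^{−n d_w/(d_w−1)} · t^{−1/(d_w−1)} } dt )^p < ∞. -/

import Mathlib

lemma exp_neg_le_rpow (x k : ℝ) (hx : 0 < x) (hk : 0 < k) :
    Real.exp (-x) ≤ k ^ k * x ^ (-k) := by
  rw [Real.rpow_def_of_pos hx, Real.rpow_def_of_pos hk, ← Real.exp_add]
  apply Real.exp_le_exp.2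
  have h1 : Real.log (x / k) ≤ x / k - 1 := Real.log_le_sub_one_of_pos (by positivity)
  have h2 : Real.log (x / k) = Real.log x - Real.log k :=
    Real.log_div (ne_of_gt hx) (ne_of_gt hk)
  have h3 : k * Real.log (x / k) ≤ k * (x / k - 1) := mul_le_mul_of_nonneg_left h1 hk.le
  have h4 : k * (x / k) = x := mul_div_cancel₀ x (ne_of_gt hk)
  nlinarith [h3, h4]

/-- The key convergence estimate for the dyadic decomposition of the `Lᵖ` norm of the
1-order resolvent kernel under sub-Gaussian heat kernel bounds. -/
theorem dyadic_subgaussian_series_summable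
    (p : ℕ) (hp : 2 ≤ p) (df dw c₃ : ℝ) (hdf : 1 ≤ df) (hdw : 2 ≤ dw)
    (hdim : 0 < df - p * (df - dw)) (hc : 0 < c₃) :
    Summable (fun n : ℕ =>
      (2 : ℝ) ^ (-((n : ℝ) + 1) * df) *
        (∫ t in Set.Ioc (0:ℝ) 1,
            t ^ (-(df / dw)) *
              Real.exp (-c₃ * (2 : ℝ) ^ (-((n : ℝ) + 1) * dw / (dw - 1)) *
                t ^ (-(1 / (dw - 1))))) ^ p) := by
  have hpR : (2:ℝ) ≤ (p:ℝ) := by exact_mod_cast hp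
  have hp0 : (0:ℝ) < p := by linarith
  have hdw1 : (0:ℝ) < dw - 1 := by linarith
  have hdw0 : (0:ℝ) < dw := by linarith
  have hdf0 : (0:ℝ) < df := by linarith
  set L : ℝ := (dw - 1) * (df - dw) / dw with hLdef
  set U : ℝ := df * (dw - 1) / ((p:ℝ) * dw) with hUdef
  have hU : 0 < U := by positivity
  have hLU : L < U := by
    rw [hLdef, hUdef, div_lt_div_iff₀ hdw0 (by positivity)]
    have h := mul_lt_mul_of_pos_right
      (show (p:ℝ) * (df - dw) < df from by linarith) (mul_pos hdw1 hdw0)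
    nlinarith [h]
  have hMU : max L 0 < U := max_lt hLU hU
  set k : ℝ := (max L 0 + U) / 2 with hkdef
  have hk0 : 0 < k := by
    have : (0:ℝ) ≤ max L 0 := le_max_right _ _
    rw [hkdef]; linarith
  have hkL : L < k := by
    have : L ≤ max L 0 := le_max_left _ _
    rw [hkdef]; linarith
  have hkU : k < U := by rw [hkdef]; linarith
  set s : ℝ := k / (dw - 1) - df / dw with hsdef
  have hs : -1 < s := by
    have h2 : (df / dw - 1) * (dw - 1) < k := by
      have heq : (df / dw - 1) * (dw - 1) = L := by rw [hLdef]; field_simp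
      rw [heq]; exact hkL
    have h3 := (lt_div_iff₀ hdw1).2 h2
    rw [hsdef]; linarith
  set ε : ℝ := df - dw * k * p / (dw - 1) with hεdef
  have hε : 0 < ε := by
    have h3 : k * ((p:ℝ) * dw) < df * (dw - 1) := by
      have := (lt_div_iff₀ (by positivity)).1 hkU
      linarith
    rw [hεdef, sub_pos, div_lt_iff₀ hdw1]
    nlinarith [h3]
  -- the comparison constant
  set A : ℝ := ∫ t in Set.Ioc (0:ℝ) 1, t ^ s with hAdef
  have hInt : MeasureTheory.IntegrableOn (fun t : ℝ => t ^ s) (Set.Ioc (0:ℝ) 1) := by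
    have h := intervalIntegral.intervalIntegrable_rpow' (a := 0) (b := 1) hs
    exact (intervalIntegrable_iff_integrableOn_Ioc_of_le (by norm_num)).1 h
  have hA0 : 0 ≤ A := by
    rw [hAdef]
    apply MeasureTheory.setIntegral_nonneg measurableSet_Ioc
    intro t ht
    exact Real.rpow_nonneg ht.1.le _
  set C : ℝ := (k ^ k * c₃ ^ (-k) * A) ^ p with hCdef
  have hC0 : 0 ≤ C := by
    rw [hCdef]
    apply pow_nonneg
    have : (0:ℝ) ≤ k ^ k := Real.rpow_nonneg hk0.le _
    have : (0:ℝ) ≤ c₃ ^ (-k) := Real.rpow_nonneg hc.le _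
    positivity
  set r : ℝ := (2:ℝ) ^ (-ε) with hrdef
  have hr0 : 0 ≤ r := Real.rpow_nonneg (by norm_num) _
  have hr1 : r < 1 := Real.rpow_lt_one_of_one_lt_of_neg (by norm_num) (by linarith)
  -- bound each term
  have key : ∀ n : ℕ,
      (2 : ℝ) ^ (-((n : ℝ) + 1) * df) *
        (∫ t in Set.Ioc (0:ℝ) 1,
            t ^ (-(df / dw)) *
              Real.exp (-c₃ * (2 : ℝ) ^ (-((n : ℝ) + 1) * dw / (dw - 1)) *
                t ^ (-(1 / (dw - 1))))) ^ p ≤ C * r ^ (n + 1) := by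
    intro n
    set b : ℝ := (2:ℝ) ^ (-((n : ℝ) + 1) * dw / (dw - 1)) with hbdef
    have hb : 0 < b := Real.rpow_pos_of_pos (by norm_num) _
    set I : ℝ := ∫ t in Set.Ioc (0:ℝ) 1,
        t ^ (-(df / dw)) * Real.exp (-c₃ * b * t ^ (-(1 / (dw - 1)))) with hIdef
    have hI0 : 0 ≤ I := by
      rw [hIdef]
      apply MeasureTheory.setIntegral_nonneg measurableSet_Ioc
      intro t ht
      exact mul_nonneg (Real.rpow_nonneg ht.1.le _) (Real.exp_nonneg _)
    set K : ℝ := k ^ k * c₃ ^ (-k) * b ^ (-k) with hKdef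
    have hK0 : 0 < K := by
      have h1 : (0:ℝ) < k ^ k := Real.rpow_pos_of_pos hk0 _
      have h2 : (0:ℝ) < c₃ ^ (-k) := Real.rpow_pos_of_pos hc _
      have h3 : (0:ℝ) < b ^ (-k) := Real.rpow_pos_of_pos hb _
      positivity
    have hIle : I ≤ K * A := by
      rw [hIdef, hAdef, ← MeasureTheory.integral_const_mul]
      apply MeasureTheory.integral_mono_of_nonneg
      · refine (MeasureTheory.ae_restrict_iff' measurableSet_Ioc).2 (Filter.Eventually.of_forall ?_)
        intro t ht
        exact mul_nonneg (Real.rpow_nonneg ht.1.le _) (Real.exp_nonneg _)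
      · exact hInt.const_mul K
      · refine (MeasureTheory.ae_restrict_iff' measurableSet_Ioc).2 (Filter.Eventually.of_forall ?_)
        intro t ht
        have ht0 : 0 < t := ht.1
        have hte : 0 < t ^ (-(1 / (dw - 1))) := Real.rpow_pos_of_pos ht0 _
        have hx : 0 < c₃ * b * t ^ (-(1 / (dw - 1))) := by positivity
        have h4 : Real.exp (-(c₃ * b * t ^ (-(1 / (dw - 1))))) ≤
            k ^ k * (c₃ * b * t ^ (-(1 / (dw - 1)))) ^ (-k) := exp_neg_le_rpow _ _ hx hk0
        have h5 : (c₃ * b * t ^ (-(1 / (dw - 1)))) ^ (-k)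
            = c₃ ^ (-k) * b ^ (-k) * t ^ (k / (dw - 1)) := by
          rw [Real.mul_rpow (by positivity) hte.le, Real.mul_rpow hc.le hb.le,
            ← Real.rpow_mul ht0.le]
          congr 1
          ring
        have h6 : -c₃ * b * t ^ (-(1 / (dw - 1))) = -(c₃ * b * t ^ (-(1 / (dw - 1)))) := by ring
        calc t ^ (-(df / dw)) * Real.exp (-c₃ * b * t ^ (-(1 / (dw - 1))))
            ≤ t ^ (-(df / dw)) * (k ^ k * (c₃ ^ (-k) * b ^ (-k) * t ^ (k / (dw - 1)))) := by
              apply mul_le_mul_of_nonneg_left _ (Real.rpow_nonneg ht0.le _)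
              rw [h6]
              calc Real.exp (-(c₃ * b * t ^ (-(1 / (dw - 1)))))
                  ≤ k ^ k * (c₃ * b * t ^ (-(1 / (dw - 1)))) ^ (-k) := h4
                _ = k ^ k * (c₃ ^ (-k) * b ^ (-k) * t ^ (k / (dw - 1))) := by rw [h5]
          _ = K * t ^ s := by
              rw [hKdef, hsdef,
                show k / (dw - 1) - df / dw = -(df / dw) + k / (dw - 1) from by ring,
                Real.rpow_add ht0]
              ring
    have hstep : (2 : ℝ) ^ (-((n : ℝ) + 1) * df) * I ^ p ≤
        (2 : ℝ) ^ (-((n : ℝ) + 1) * df) * (K * A) ^ p := by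
      apply mul_le_mul_of_nonneg_left _ (Real.rpow_nonneg (by norm_num) _)
      exact pow_le_pow_left₀ hI0 hIle p
    refine hstep.trans (le_of_eq ?_)
    -- identify the right-hand side with C * r ^ (n+1)
    have hb' : b ^ (-k) = (2:ℝ) ^ ((-((n : ℝ) + 1) * dw / (dw - 1)) * (-k)) := by
      rw [hbdef, ← Real.rpow_mul (by norm_num)]
    have hbp : (b ^ (-k)) ^ p = (2:ℝ) ^ (((-((n : ℝ) + 1) * dw / (dw - 1)) * (-k)) * p) := by
      rw [hb', ← Real.rpow_natCast ((2:ℝ) ^ _) p, ← Real.rpow_mul (by norm_num)]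
    have hrn : r ^ (n + 1) = (2:ℝ) ^ (-ε * ((n:ℝ) + 1)) := by
      rw [hrdef, ← Real.rpow_natCast ((2:ℝ) ^ (-ε)) (n + 1), ← Real.rpow_mul (by norm_num)]
      push_cast
      ring_nf
    have hKA : (K * A) ^ p = (k ^ k * c₃ ^ (-k) * A) ^ p * (b ^ (-k)) ^ p := by
      rw [hKdef]
      rw [show k ^ k * c₃ ^ (-k) * b ^ (-k) * A = (k ^ k * c₃ ^ (-k) * A) * b ^ (-k) by ring,
        mul_pow]
    rw [hKA, hbp, hCdef, hrn]
    rw [show (2 : ℝ) ^ (-((n : ℝ) + 1) * df) *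
        ((k ^ k * c₃ ^ (-k) * A) ^ p * (2:ℝ) ^ (((-((n : ℝ) + 1) * dw / (dw - 1)) * (-k)) * p))
        = (k ^ k * c₃ ^ (-k) * A) ^ p *
          ((2 : ℝ) ^ (-((n : ℝ) + 1) * df) *
            (2:ℝ) ^ (((-((n : ℝ) + 1) * dw / (dw - 1)) * (-k)) * p)) by ring,
      ← Real.rpow_add (by norm_num : (0:ℝ) < 2)]
    congr 1
    rw [hεdef]
    field_simp
    ring
  -- conclude by comparison with a geometric series
  have hgeom : Summable (fun n : ℕ => C * r ^ (n + 1)) := by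
    have h := (summable_geometric_of_lt_one hr0 hr1).mul_left (C * r)
    refine h.congr fun n => ?_
    rw [pow_succ]
    ring
  refine Summable.of_nonneg_of_le (fun n => ?_) key hgeom
  have hI0 : 0 ≤ (∫ t in Set.Ioc (0:ℝ) 1,
      t ^ (-(df / dw)) *
        Real.exp (-c₃ * (2 : ℝ) ^ (-((n : ℝ) + 1) * dw / (dw - 1)) *
          t ^ (-(1 / (dw - 1))))) := by
    apply MeasureTheory.setIntegral_nonneg measurableSet_Ioc
    intro t ht
    exact mul_nonneg (Real.rpow_nonneg ht.1.le _) (Real.exp_nonneg _)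
  exact mul_nonneg (Real.rpow_nonneg (by norm_num) _) (pow_nonneg hI0 p)
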